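/- The function λ_{sph} is strictly decreasing on (x_{ph}, x_{ms}) and strictly increasing on (x_{ms}, ∞), with λ_{sph}(x) → ∞ both as x → x_{ph}⁺ and as x → ∞; likewise ε_{sph} is strictly decreasing on (x_{ph}, x_{ms}) and strictly increasing on (x_{ms}, ∞), with ε_{sph}(x) → ∞ as x → x_{ph}⁺ and ε_{sph}(x) → 1 as x → ∞. In particular λ_{ms} := λ_{sph}(x_{ms}) and ε_{ms} := ε_{sph}(x_{ms}) are the global minima of these functions on (x_{ph}, ∞), and ε_{sph}(x) < 1 for all x > x_{ms}. -/

import Mathlib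

open Real Filter Topology Set

noncomputable section

/-- `h(x) = x(x−3) + 2α²(1−β²) + 2αβ√(x − α²(1−β²))`. -/
def hfun (α β x : ℝ) : ℝ :=
  x * (x - 3) + 2 * α ^ 2 * (1 - β ^ 2) + 2 * α * β * Real.sqrt (x - α ^ 2 * (1 - β ^ 2))

/-- `G(x) = x·Δ̄(x) − [h(x) − x(x−1)]²`, with `Δ̄(x) = x² − 2x + α²`. -/
def Gfun (α β x : ℝ) : ℝ :=
  x * (x ^ 2 - 2 * x + α ^ 2) - (hfun α β x - x * (x - 1)) ^ 2

/-- The effective potential `w_{α,β,λ}(x) = αβλ/x² + √(Δ̄(x)(1 + λ²/x²))`. -/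
def wfun (α β lam x : ℝ) : ℝ :=
  α * β * lam / x ^ 2 + Real.sqrt ((x ^ 2 - 2 * x + α ^ 2) * (1 + lam ^ 2 / x ^ 2))

/-- `λ_{sph}(x) = x(√(x − α²(1−β²)) − αβ)/√(h(x))`. -/
def lamsph (α β x : ℝ) : ℝ :=
  x * (Real.sqrt (x - α ^ 2 * (1 - β ^ 2)) - α * β) / Real.sqrt (hfun α β x)

/-- `ε_{sph}(x) = (x² − 2x + α²(1−β²) + αβ√(x − α²(1−β²)))/(x√(h(x)))`. -/
def epssph (α β x : ℝ) : ℝ :=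
  (x ^ 2 - 2 * x + α ^ 2 * (1 - β ^ 2) + α * β * Real.sqrt (x - α ^ 2 * (1 - β ^ 2))) /
    (x * Real.sqrt (hfun α β x))

/-! ### Auxiliary lemmas -/

lemma tendsto_sqrt_atTop' : Tendsto Real.sqrt atTop atTop := by
  apply tendsto_atTop_atTop.mpr
  intro b
  refine ⟨max 0 (b ^ 2), fun a ha => ?_⟩
  have h1 : b ≤ |b| := le_abs_self b
  have h2 : |b| = Real.sqrt (b ^ 2) := (Real.sqrt_sq_eq_abs b).symm
  have h3 : Real.sqrt (b ^ 2) ≤ Real.sqrt a :=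
    Real.sqrt_le_sqrt (le_trans (le_max_right _ _) ha)
  linarith

lemma ufact (α β x : ℝ) (hα0 : 0 ≤ α) (hα1 : α < 1) (hβ0 : -1 ≤ β) (hβ1 : β ≤ 1)
    (hx : 1 < x) : 0 < x - α ^ 2 * (1 - β ^ 2) := by nlinarith

lemma sfact (α β x : ℝ) (hα0 : 0 ≤ α) (hα1 : α < 1) (hβ0 : -1 ≤ β) (hβ1 : β ≤ 1)
    (hx : 1 < x) : α * β < Real.sqrt (x - α ^ 2 * (1 - β ^ 2)) := by
  rcases le_or_gt (α * β) 0 with h | h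
  · exact lt_of_le_of_lt h (Real.sqrt_pos.mpr (ufact α β x hα0 hα1 hβ0 hβ1 hx))
  · have h2 : (α * β) ^ 2 < x - α ^ 2 * (1 - β ^ 2) := by nlinarith
    exact (Real.lt_sqrt h.le).mpr h2

lemma continuous_hfun (α β : ℝ) : Continuous (hfun α β) := by
  unfold hfun
  fun_prop

lemma hasDerivAt_hfun (α β x : ℝ) (hu : 0 < x - α ^ 2 * (1 - β ^ 2)) :
    HasDerivAt (hfun α β)
      (2 * x - 3 + 2 * α * β / (2 * Real.sqrt (x - α ^ 2 * (1 - β ^ 2)))) x := by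
  have hsq : HasDerivAt (fun y : ℝ => Real.sqrt (y - α ^ 2 * (1 - β ^ 2)))
      (1 / (2 * Real.sqrt (x - α ^ 2 * (1 - β ^ 2)))) x := by
    have h1 : HasDerivAt (fun y : ℝ => y - α ^ 2 * (1 - β ^ 2)) 1 x := by
      simpa using (hasDerivAt_id x).sub_const (α ^ 2 * (1 - β ^ 2))
    exact h1.sqrt hu.ne'
  have h2 : HasDerivAt (fun y : ℝ => y * (y - 3) + 2 * α ^ 2 * (1 - β ^ 2)) (2 * x - 3) x := by
    have := ((hasDerivAt_id x).mul ((hasDerivAt_id x).sub_const 3)).add_const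
      (2 * α ^ 2 * (1 - β ^ 2))
    have h2' : HasDerivAt (fun x => x * (x - 3) + 2 * α ^ 2 * (1 - β ^ 2)) (x - 3 + x) x := by
      simpa using this
    convert h2' using 1
    ring
  have := h2.add ((hsq.const_mul (2 * α * β)))
  unfold hfun
  refine this.congr_deriv ?_
  ring

set_option maxHeartbeats 1000000 in
lemma hasDerivAt_lamsph (α β x : ℝ) (hu : 0 < x - α ^ 2 * (1 - β ^ 2))
    (hh : 0 < hfun α β x) :
    HasDerivAt (lamsph α β)
      (Gfun α β x / (2 * Real.sqrt (x - α ^ 2 * (1 - β ^ 2)) * Real.sqrt (hfun α β x) ^ 3)) x := by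
  have hs0 : 0 < Real.sqrt (x - α ^ 2 * (1 - β ^ 2)) := Real.sqrt_pos.mpr hu
  have hw0 : 0 < Real.sqrt (hfun α β x) := Real.sqrt_pos.mpr hh
  have hsq : HasDerivAt (fun y : ℝ => Real.sqrt (y - α ^ 2 * (1 - β ^ 2)))
      (1 / (2 * Real.sqrt (x - α ^ 2 * (1 - β ^ 2)))) x := by
    have h1 : HasDerivAt (fun y : ℝ => y - α ^ 2 * (1 - β ^ 2)) 1 x := by
      simpa using (hasDerivAt_id x).sub_const (α ^ 2 * (1 - β ^ 2))
    exact h1.sqrt hu.ne'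
  have hN : HasDerivAt (fun y : ℝ => y * (Real.sqrt (y - α ^ 2 * (1 - β ^ 2)) - α * β))
      (1 * (Real.sqrt (x - α ^ 2 * (1 - β ^ 2)) - α * β)
        + x * (1 / (2 * Real.sqrt (x - α ^ 2 * (1 - β ^ 2))))) x :=
    (hasDerivAt_id x).mul (hsq.sub_const (α * β))
  have hD : HasDerivAt (fun y : ℝ => Real.sqrt (hfun α β y))
      ((2 * x - 3 + 2 * α * β / (2 * Real.sqrt (x - α ^ 2 * (1 - β ^ 2))))
        / (2 * Real.sqrt (hfun α β x))) x := by
    exact (hasDerivAt_hfun α β x hu).sqrt hh.ne'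
  have := hN.div hD hw0.ne'
  refine this.congr_deriv ?_
  symm
  set s := Real.sqrt (x - α ^ 2 * (1 - β ^ 2)) with hsdef
  set w := Real.sqrt (hfun α β x) with hwdef
  have hs2 : s ^ 2 = x - α ^ 2 * (1 - β ^ 2) := Real.sq_sqrt hu.le
  have hw2 : w ^ 2 = x * (x - 3) + 2 * α ^ 2 * (1 - β ^ 2) + 2 * α * β * s := by
    rw [hwdef]; rw [Real.sq_sqrt hh.le]; rw [hfun]
  rw [Gfun, hfun, ← hsdef]
  clear_value s w
  have hx : x = s ^ 2 + α ^ 2 * (1 - β ^ 2) := by linarith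
  subst hx
  field_simp
  linear_combination (-(s * 2 * (s - α * β) + (s ^ 2 + α ^ 2 * (1 - β ^ 2)))) * hw2

set_option maxHeartbeats 1600000 in
lemma hasDerivAt_epssph (α β x : ℝ) (hx0 : 0 < x) (hu : 0 < x - α ^ 2 * (1 - β ^ 2))
    (hh : 0 < hfun α β x) :
    HasDerivAt (epssph α β)
      (Gfun α β x / (2 * x ^ 2 * Real.sqrt (hfun α β x) ^ 3)) x := by
  have hs0 : 0 < Real.sqrt (x - α ^ 2 * (1 - β ^ 2)) := Real.sqrt_pos.mpr hu
  have hw0 : 0 < Real.sqrt (hfun α β x) := Real.sqrt_pos.mpr hh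
  have hsq : HasDerivAt (fun y : ℝ => Real.sqrt (y - α ^ 2 * (1 - β ^ 2)))
      (1 / (2 * Real.sqrt (x - α ^ 2 * (1 - β ^ 2)))) x := by
    have h1 : HasDerivAt (fun y : ℝ => y - α ^ 2 * (1 - β ^ 2)) 1 x := by
      simpa using (hasDerivAt_id x).sub_const (α ^ 2 * (1 - β ^ 2))
    exact h1.sqrt hu.ne'
  have hP : HasDerivAt
      (fun y : ℝ => y ^ 2 - 2 * y + α ^ 2 * (1 - β ^ 2)
        + α * β * Real.sqrt (y - α ^ 2 * (1 - β ^ 2)))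
      (2 * x - 2 + α * β * (1 / (2 * Real.sqrt (x - α ^ 2 * (1 - β ^ 2))))) x := by
    have h2 : HasDerivAt (fun y : ℝ => y ^ 2 - 2 * y + α ^ 2 * (1 - β ^ 2)) (2 * x - 2) x := by
      have := (((hasDerivAt_pow 2 x).sub ((hasDerivAt_id x).const_mul 2)).add_const
        (α ^ 2 * (1 - β ^ 2)))
      refine this.congr_deriv ?_
      simp
    exact h2.add (hsq.const_mul (α * β))
  have hW : HasDerivAt (fun y : ℝ => Real.sqrt (hfun α β y))
      (1 / (2 * Real.sqrt (hfun α β x))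
        * (2 * x - 3 + 2 * α * β / (2 * Real.sqrt (x - α ^ 2 * (1 - β ^ 2))))) x := by
    have := (hasDerivAt_hfun α β x hu).sqrt hh.ne'
    convert this using 1
    ring
  have hQ : HasDerivAt (fun y : ℝ => y * Real.sqrt (hfun α β y))
      (1 * Real.sqrt (hfun α β x) + x * (1 / (2 * Real.sqrt (hfun α β x))
        * (2 * x - 3 + 2 * α * β / (2 * Real.sqrt (x - α ^ 2 * (1 - β ^ 2)))))) x :=
    (hasDerivAt_id x).mul hW
  have hQ0 : x * Real.sqrt (hfun α β x) ≠ 0 := by positivity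
  have := hP.div hQ hQ0
  refine this.congr_deriv ?_
  symm
  set s := Real.sqrt (x - α ^ 2 * (1 - β ^ 2)) with hsdef
  set w := Real.sqrt (hfun α β x) with hwdef
  have hs2 : s ^ 2 = x - α ^ 2 * (1 - β ^ 2) := Real.sq_sqrt hu.le
  have hw2 : w ^ 2 = x * (x - 3) + 2 * α ^ 2 * (1 - β ^ 2) + 2 * α * β * s := by
    rw [hwdef]; rw [Real.sq_sqrt hh.le]; rw [hfun]
  rw [Gfun, hfun, ← hsdef]
  clear_value s w
  have hx : x = s ^ 2 + α ^ 2 * (1 - β ^ 2) := by linarith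
  subst hx
  have hxs : s ^ 2 + α ^ 2 * (1 - β ^ 2) ≠ 0 := hx0.ne'
  field_simp
  linear_combination (-((s ^ 2 + α ^ 2 * (1 - β ^ 2)) * (s * 2 ^ 2 * ((s ^ 2 + α ^ 2 * (1 - β ^ 2)) - 1) + α * β) - s * 2 * ((s ^ 2 + α ^ 2 * (1 - β ^ 2)) * ((s ^ 2 + α ^ 2 * (1 - β ^ 2)) - 2) + α ^ 2 * (1 - β ^ 2) + s * α * β))) * hw2

lemma lamsph_tendsto_xph (α β xph : ℝ) (hα0 : 0 ≤ α) (hα1 : α < 1) (hβ0 : -1 ≤ β)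
    (hβ1 : β ≤ 1) (hxph : 1 < xph) (h0 : hfun α β xph = 0)
    (hpos : ∀ x, xph < x → 0 < hfun α β x) :
    Tendsto (lamsph α β) (𝓝[>] xph) atTop := by
  have hN : Tendsto (fun x => x * (Real.sqrt (x - α ^ 2 * (1 - β ^ 2)) - α * β)) (𝓝[>] xph)
      (𝓝 (xph * (Real.sqrt (xph - α ^ 2 * (1 - β ^ 2)) - α * β))) := by
    apply ContinuousAt.continuousWithinAt (by fun_prop) |>.tendsto
  have hNpos : 0 < xph * (Real.sqrt (xph - α ^ 2 * (1 - β ^ 2)) - α * β) := by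
    have := sfact α β xph hα0 hα1 hβ0 hβ1 hxph
    have h1 : (0:ℝ) < xph := by linarith
    nlinarith
  have hD : Tendsto (fun x => Real.sqrt (hfun α β x)) (𝓝[>] xph) (𝓝[>] 0) := by
    apply tendsto_nhdsWithin_of_tendsto_nhds_of_eventually_within
    · have : Tendsto (fun x => Real.sqrt (hfun α β x)) (𝓝 xph) (𝓝 (Real.sqrt (hfun α β xph))) :=
        ((Real.continuous_sqrt.comp (continuous_hfun α β)).continuousAt).tendsto
      rw [h0, Real.sqrt_zero] at this
      exact this.mono_left nhdsWithin_le_nhds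
    · filter_upwards [self_mem_nhdsWithin] with x hx
      exact Real.sqrt_pos.mpr (hpos x hx)
  have hInv : Tendsto (fun x => (Real.sqrt (hfun α β x))⁻¹) (𝓝[>] xph) atTop :=
    tendsto_inv_nhdsGT_zero.comp hD
  have := hN.pos_mul_atTop hNpos hInv
  refine this.congr fun x => ?_
  rw [lamsph, div_eq_mul_inv]

lemma epssph_tendsto_xph (α β xph : ℝ) (hα0 : 0 ≤ α) (hα1 : α < 1) (hβ0 : -1 ≤ β)
    (hβ1 : β ≤ 1) (hxph : 1 < xph) (h0 : hfun α β xph = 0)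
    (hpos : ∀ x, xph < x → 0 < hfun α β x) :
    Tendsto (epssph α β) (𝓝[>] xph) atTop := by
  set P : ℝ → ℝ := fun x => x ^ 2 - 2 * x + α ^ 2 * (1 - β ^ 2)
      + α * β * Real.sqrt (x - α ^ 2 * (1 - β ^ 2)) with hP
  have hN : Tendsto P (𝓝[>] xph) (𝓝 (P xph)) := by
    apply ContinuousAt.continuousWithinAt (by rw [hP]; fun_prop) |>.tendsto
  have hNpos : 0 < P xph := by
    have hu : 0 < xph - α ^ 2 * (1 - β ^ 2) := ufact α β xph hα0 hα1 hβ0 hβ1 hxph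
    have hs2 : Real.sqrt (xph - α ^ 2 * (1 - β ^ 2)) ^ 2 = xph - α ^ 2 * (1 - β ^ 2) :=
      Real.sq_sqrt hu.le
    have h0' := h0
    rw [hfun] at h0'
    have : P xph = xph * (xph - 1) / 2 := by rw [hP]; dsimp only; linarith
    rw [this]
    nlinarith
  have hD : Tendsto (fun x => x * Real.sqrt (hfun α β x)) (𝓝[>] xph) (𝓝[>] 0) := by
    apply tendsto_nhdsWithin_of_tendsto_nhds_of_eventually_within
    · have : Tendsto (fun x => x * Real.sqrt (hfun α β x)) (𝓝 xph)
          (𝓝 (xph * Real.sqrt (hfun α β xph))) :=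
        (continuous_id.mul (Real.continuous_sqrt.comp (continuous_hfun α β))).continuousAt.tendsto
      rw [h0, Real.sqrt_zero, mul_zero] at this
      exact this.mono_left nhdsWithin_le_nhds
    · filter_upwards [self_mem_nhdsWithin] with x hx
      have hx' : xph < x := hx
      have : (0:ℝ) < x := by linarith
      exact mul_pos this (Real.sqrt_pos.mpr (hpos x hx'))
  have hInv : Tendsto (fun x => (x * Real.sqrt (hfun α β x))⁻¹) (𝓝[>] xph) atTop :=
    tendsto_inv_nhdsGT_zero.comp hD
  have := hN.pos_mul_atTop hNpos hInv
  refine this.congr fun x => ?_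
  rw [epssph, div_eq_mul_inv]

lemma lamsph_tendsto_atTop (α β xph : ℝ) (hα0 : 0 ≤ α) (hα1 : α < 1) (hβ0 : -1 ≤ β)
    (hβ1 : β ≤ 1) (hpos : ∀ x, xph < x → 0 < hfun α β x) :
    Tendsto (lamsph α β) atTop atTop := by
  have hlow : Tendsto (fun x : ℝ => Real.sqrt (x - 1) - 1) atTop atTop := by
    apply Filter.tendsto_atTop_add_const_right
    exact tendsto_sqrt_atTop'.comp (tendsto_atTop_add_const_right atTop (-1) tendsto_id)
  apply tendsto_atTop_mono' atTop ?_ hlow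
  filter_upwards [eventually_gt_atTop xph, eventually_ge_atTop (2:ℝ)] with x hx h2
  have hx1 : (1:ℝ) < x := by linarith
  have hu : 0 < x - α ^ 2 * (1 - β ^ 2) := ufact α β x hα0 hα1 hβ0 hβ1 hx1
  have hsab : α * β < Real.sqrt (x - α ^ 2 * (1 - β ^ 2)) := sfact α β x hα0 hα1 hβ0 hβ1 hx1
  have hh : 0 < hfun α β x := hpos x hx
  have hw0 : 0 < Real.sqrt (hfun α β x) := Real.sqrt_pos.mpr hh
  set s := Real.sqrt (x - α ^ 2 * (1 - β ^ 2)) with hs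
  have hs0 : 0 ≤ s := Real.sqrt_nonneg _
  have hb2 : β ^ 2 ≤ 1 := by nlinarith
  have hc0 : 0 ≤ α ^ 2 * (1 - β ^ 2) := mul_nonneg (sq_nonneg α) (by linarith)
  have hc1 : α ^ 2 * (1 - β ^ 2) ≤ 1 := by nlinarith [sq_nonneg α, sq_nonneg (α*β)]
  have hab1 : α * β ≤ 1 := by nlinarith
  have hsx : s ≤ x := by
    rw [hs]
    calc Real.sqrt (x - α ^ 2 * (1 - β ^ 2)) ≤ Real.sqrt (x ^ 2) := by
          apply Real.sqrt_le_sqrt; nlinarith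
      _ = x := Real.sqrt_sq (by linarith)
  have habs : α * β * s ≤ s := by nlinarith
  have hhx2 : hfun α β x ≤ x ^ 2 := by
    rw [hfun, ← hs]
    nlinarith [habs, hsx]
  have hwx : Real.sqrt (hfun α β x) ≤ x := by
    calc Real.sqrt (hfun α β x) ≤ Real.sqrt (x ^ 2) := Real.sqrt_le_sqrt hhx2
      _ = x := by rw [Real.sqrt_sq (by linarith)]
  have hs1 : Real.sqrt (x - 1) ≤ s := by
    rw [hs]; apply Real.sqrt_le_sqrt; nlinarith
  have key : s - α * β ≤ lamsph α β x := by
    rw [lamsph, ← hs]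
    have h1 : (1:ℝ) ≤ x / Real.sqrt (hfun α β x) := (one_le_div hw0).mpr hwx
    have h2 : x * (s - α * β) / Real.sqrt (hfun α β x)
        = (s - α * β) * (x / Real.sqrt (hfun α β x)) := by ring
    rw [h2]
    nlinarith [hsab]
  linarith

lemma epssph_tendsto_one (α β xph : ℝ) (hα0 : 0 ≤ α) (hα1 : α < 1) (hβ0 : -1 ≤ β)
    (hβ1 : β ≤ 1) (hpos : ∀ x, xph < x → 0 < hfun α β x) :
    Tendsto (epssph α β) atTop (𝓝 1) := by
  set c := α ^ 2 * (1 - β ^ 2) with hc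
  have hb2 : β ^ 2 ≤ 1 := by nlinarith
  have hc0 : 0 ≤ c := mul_nonneg (sq_nonneg α) (by linarith)
  have hc1 : c ≤ 1 := by rw [hc]; nlinarith [sq_nonneg α, sq_nonneg (α*β)]
  have T0 : Tendsto (fun x : ℝ => Real.sqrt (x - c) / x ^ 2) atTop (𝓝 0) := by
    have hub : ∀ᶠ x : ℝ in atTop, Real.sqrt (x - c) / x ^ 2 ≤ x⁻¹ := by
      filter_upwards [eventually_ge_atTop (2:ℝ)] with x hx
      have hx0 : (0:ℝ) < x := by linarith
      have h1 : Real.sqrt (x - c) ≤ x := by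
        calc Real.sqrt (x - c) ≤ Real.sqrt (x ^ 2) := by
              apply Real.sqrt_le_sqrt; nlinarith
          _ = x := Real.sqrt_sq hx0.le
      rw [div_le_iff₀ (by positivity)]
      calc Real.sqrt (x - c) ≤ x := h1
        _ = x⁻¹ * x ^ 2 := by field_simp
    have hlb : ∀ᶠ x : ℝ in atTop, (0:ℝ) ≤ Real.sqrt (x - c) / x ^ 2 := by
      filter_upwards [eventually_ge_atTop (1:ℝ)] with x hx
      positivity
    exact tendsto_of_tendsto_of_tendsto_of_le_of_le' tendsto_const_nhds
      tendsto_inv_atTop_zero hlb hub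
  have Tinv : Tendsto (fun x : ℝ => x⁻¹) atTop (𝓝 0) := tendsto_inv_atTop_zero
  have TA : Tendsto (fun x : ℝ => (x ^ 2 - 2 * x + c + α * β * Real.sqrt (x - c)) / x ^ 2)
      atTop (𝓝 1) := by
    have : Tendsto (fun x : ℝ => 1 - 2 * x⁻¹ + c * (x⁻¹ * x⁻¹)
        + α * β * (Real.sqrt (x - c) / x ^ 2)) atTop
        (𝓝 (1 - 2 * 0 + c * (0 * 0) + α * β * 0)) :=
      (((tendsto_const_nhds.sub (Tinv.const_mul 2)).add
        ((Tinv.mul Tinv).const_mul c)).add (T0.const_mul (α * β)))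
    simp only [mul_zero, zero_mul, sub_zero, add_zero] at this
    apply this.congr'
    filter_upwards [eventually_ge_atTop (1:ℝ)] with x hx
    have hx0 : x ≠ 0 := by linarith
    field_simp
  have TB : Tendsto (fun x : ℝ => Real.sqrt (hfun α β x) / x) atTop (𝓝 1) := by
    have Th : Tendsto (fun x : ℝ => hfun α β x / x ^ 2) atTop (𝓝 1) := by
      have : Tendsto (fun x : ℝ => 1 - 3 * x⁻¹ + 2 * c * (x⁻¹ * x⁻¹)
          + 2 * α * β * (Real.sqrt (x - c) / x ^ 2)) atTop
          (𝓝 (1 - 3 * 0 + 2 * c * (0 * 0) + 2 * α * β * 0)) :=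
        (((tendsto_const_nhds.sub (Tinv.const_mul 3)).add
          ((Tinv.mul Tinv).const_mul (2 * c))).add (T0.const_mul (2 * α * β)))
      simp only [mul_zero, zero_mul, sub_zero, add_zero] at this
      apply this.congr'
      filter_upwards [eventually_ge_atTop (1:ℝ)] with x hx
      have hx0 : x ≠ 0 := by linarith
      rw [hfun, hc]
      field_simp
    have Tsq : Tendsto (fun x : ℝ => Real.sqrt (hfun α β x / x ^ 2)) atTop (𝓝 1) := by
      have := (Real.continuous_sqrt.continuousAt (x := (1:ℝ))).tendsto.comp Th
      simpa [Function.comp_def] using this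
    apply Tsq.congr'
    filter_upwards [eventually_gt_atTop (0:ℝ)] with x hx
    rw [Real.sqrt_div' _ (by positivity : (0:ℝ) ≤ x ^ 2), Real.sqrt_sq hx.le]
  have := TA.div TB one_ne_zero
  simp only [div_one] at this
  apply this.congr'
  filter_upwards [eventually_gt_atTop (max xph 0)] with x hx
  have hx0 : (0:ℝ) < x := lt_of_le_of_lt (le_max_right _ _) hx
  have hh : 0 < hfun α β x := hpos x (lt_of_le_of_lt (le_max_left _ _) hx)
  have hw0 : 0 < Real.sqrt (hfun α β x) := Real.sqrt_pos.mpr hh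
  rw [Pi.div_apply, epssph, hc]
  field_simp

/-- `λ_{sph}` and `ε_{sph}` are strictly decreasing on `(x_{ph}, x_{ms})` and
strictly increasing on `(x_{ms}, ∞)`, with `λ_{sph} → ∞` at both ends,
`ε_{sph} → ∞` as `x → x_{ph}⁺` and `ε_{sph} → 1` as `x → ∞`.  In particular
`λ_{ms} = λ_{sph}(x_{ms})` and `ε_{ms} = ε_{sph}(x_{ms})` are the global minima
on `(x_{ph}, ∞)`, and `ε_{sph}(x) < 1` for all `x > x_{ms}`. -/
theorem lamsph_epssph_monotonicity (α β : ℝ) (hα0 : 0 ≤ α) (hα1 : α < 1)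
    (hβ0 : -1 ≤ β) (hβ1 : β ≤ 1)
    (xph : ℝ)
    (hph1 : 1 + Real.sqrt (1 - α ^ 2) < xph) (hph2 : hfun α β xph = 0)
    (hph3 : ∀ x : ℝ, 1 + Real.sqrt (1 - α ^ 2) < x → x < xph → hfun α β x < 0)
    (hph4 : ∀ x : ℝ, xph < x → 0 < hfun α β x)
    (xms : ℝ)
    (hms1 : xph < xms) (hms2 : Gfun α β xms = 0)
    (hms3 : ∀ x : ℝ, xph ≤ x → x < xms → Gfun α β x < 0)
    (hms4 : ∀ x : ℝ, xms < x → 0 < Gfun α β x) :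
    StrictAntiOn (lamsph α β) (Set.Ioo xph xms) ∧
    StrictMonoOn (lamsph α β) (Set.Ioi xms) ∧
    Tendsto (lamsph α β) (𝓝[>] xph) atTop ∧
    Tendsto (lamsph α β) atTop atTop ∧
    StrictAntiOn (epssph α β) (Set.Ioo xph xms) ∧
    StrictMonoOn (epssph α β) (Set.Ioi xms) ∧
    Tendsto (epssph α β) (𝓝[>] xph) atTop ∧
    Tendsto (epssph α β) atTop (𝓝 1) ∧
    (∀ x : ℝ, xph < x → lamsph α β xms ≤ lamsph α β x) ∧
    (∀ x : ℝ, xph < x → epssph α β xms ≤ epssph α β x) ∧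
    (∀ x : ℝ, xms < x → epssph α β x < 1) := by
  have hxph1 : 1 < xph := by
    have h1 : 0 < Real.sqrt (1 - α ^ 2) := Real.sqrt_pos.mpr (by nlinarith)
    linarith
  -- derivative facts for all `x > xph`
  have dlam : ∀ x : ℝ, xph < x → HasDerivAt (lamsph α β)
      (Gfun α β x / (2 * Real.sqrt (x - α ^ 2 * (1 - β ^ 2))
        * Real.sqrt (hfun α β x) ^ 3)) x := by
    intro x hx
    exact hasDerivAt_lamsph α β x (ufact α β x hα0 hα1 hβ0 hβ1 (hxph1.trans hx)) (hph4 x hx)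
  have deps : ∀ x : ℝ, xph < x → HasDerivAt (epssph α β)
      (Gfun α β x / (2 * x ^ 2 * Real.sqrt (hfun α β x) ^ 3)) x := by
    intro x hx
    exact hasDerivAt_epssph α β x (by linarith)
      (ufact α β x hα0 hα1 hβ0 hβ1 (hxph1.trans hx)) (hph4 x hx)
  have denom1 : ∀ x : ℝ, xph < x →
      0 < 2 * Real.sqrt (x - α ^ 2 * (1 - β ^ 2)) * Real.sqrt (hfun α β x) ^ 3 := by
    intro x hx
    have hs0 : 0 < Real.sqrt (x - α ^ 2 * (1 - β ^ 2)) :=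
      Real.sqrt_pos.mpr (ufact α β x hα0 hα1 hβ0 hβ1 (hxph1.trans hx))
    have hw0 : 0 < Real.sqrt (hfun α β x) := Real.sqrt_pos.mpr (hph4 x hx)
    positivity
  have denom2 : ∀ x : ℝ, xph < x → 0 < 2 * x ^ 2 * Real.sqrt (hfun α β x) ^ 3 := by
    intro x hx
    have hx0 : (0:ℝ) < x := by linarith
    have hw0 : 0 < Real.sqrt (hfun α β x) := Real.sqrt_pos.mpr (hph4 x hx)
    positivity
  -- monotonicity on closed-ended intervals
  have lamAnti : StrictAntiOn (lamsph α β) (Set.Ioc xph xms) := by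
    apply strictAntiOn_of_deriv_neg (convex_Ioc xph xms)
    · exact fun x hx => ((dlam x hx.1).continuousAt).continuousWithinAt
    · intro x hx
      rw [interior_Ioc] at hx
      rw [(dlam x hx.1).deriv]
      exact div_neg_of_neg_of_pos (hms3 x hx.1.le hx.2) (denom1 x hx.1)
  have lamMono : StrictMonoOn (lamsph α β) (Set.Ici xms) := by
    apply strictMonoOn_of_deriv_pos (convex_Ici xms)
    · exact fun x hx => ((dlam x (lt_of_lt_of_le hms1 hx)).continuousAt).continuousWithinAt
    · intro x hx
      rw [interior_Ici] at hx
      rw [(dlam x (hms1.trans hx)).deriv]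
      exact div_pos (hms4 x hx) (denom1 x (hms1.trans hx))
  have epsAnti : StrictAntiOn (epssph α β) (Set.Ioc xph xms) := by
    apply strictAntiOn_of_deriv_neg (convex_Ioc xph xms)
    · exact fun x hx => ((deps x hx.1).continuousAt).continuousWithinAt
    · intro x hx
      rw [interior_Ioc] at hx
      rw [(deps x hx.1).deriv]
      exact div_neg_of_neg_of_pos (hms3 x hx.1.le hx.2) (denom2 x hx.1)
  have epsMono : StrictMonoOn (epssph α β) (Set.Ici xms) := by
    apply strictMonoOn_of_deriv_pos (convex_Ici xms)
    · exact fun x hx => ((deps x (lt_of_lt_of_le hms1 hx)).continuousAt).continuousWithinAt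
    · intro x hx
      rw [interior_Ici] at hx
      rw [(deps x (hms1.trans hx)).deriv]
      exact div_pos (hms4 x hx) (denom2 x (hms1.trans hx))
  have epsLim1 := epssph_tendsto_one α β xph hα0 hα1 hβ0 hβ1 hph4
  -- ε ≤ 1 on (xms, ∞)
  have epsLe1 : ∀ y : ℝ, xms < y → epssph α β y ≤ 1 := by
    intro y hy
    apply ge_of_tendsto epsLim1
    filter_upwards [eventually_ge_atTop (y + 1)] with z hz
    exact (epsMono hy.le (by linarith : xms ≤ z) (by linarith)).le
  refine ⟨lamAnti.mono Ioo_subset_Ioc_self, lamMono.mono Ioi_subset_Ici_self,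
    lamsph_tendsto_xph α β xph hα0 hα1 hβ0 hβ1 hxph1 hph2 hph4,
    lamsph_tendsto_atTop α β xph hα0 hα1 hβ0 hβ1 hph4,
    epsAnti.mono Ioo_subset_Ioc_self, epsMono.mono Ioi_subset_Ici_self,
    epssph_tendsto_xph α β xph hα0 hα1 hβ0 hβ1 hxph1 hph2 hph4,
    epsLim1, ?_, ?_, ?_⟩
  · intro x hx
    rcases lt_trichotomy x xms with h | h | h
    · exact (lamAnti ⟨hx, h.le⟩ ⟨hms1, le_rfl⟩ h).le
    · rw [h]
    · exact (lamMono self_mem_Ici h.le h).le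
  · intro x hx
    rcases lt_trichotomy x xms with h | h | h
    · exact (epsAnti ⟨hx, h.le⟩ ⟨hms1, le_rfl⟩ h).le
    · rw [h]
    · exact (epsMono self_mem_Ici h.le h).le
  · intro x hx
    have h1 : epssph α β x < epssph α β (x + 1) :=
      epsMono (mem_Ici.mpr hx.le) (mem_Ici.mpr (by linarith)) (by linarith)
    exact lt_of_lt_of_le h1 (epsLe1 (x + 1) (by linarith))

end
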